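/- For every infinite cardinal κ with κ ≤ 𝔠 (the cardinality of the continuum), there exists a countable dense subset C of the product space 2^κ = Bool^I (where I is an index set of cardinality κ, with the product topology) such that every point c ∈ C is the limit of some sequence of points of C ∖ {c}. -/

import Mathlib

open Filter

lemma rat_interval_avoid (r : ℝ) (s : Finset ℝ) (hr : r ∉ s) :
    ∃ a b : ℚ, (a:ℝ) < r ∧ r < (b:ℝ) ∧ ∀ y ∈ s, ¬((a:ℝ) < y ∧ y < (b:ℝ)) := by
  by_cases hs : s.Nonempty
  · set t := s.image (fun y => |y - r|) with ht_def
    have ht : t.Nonempty := hs.image _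
    set δ := t.min' ht with hδ_def
    have hδpos : 0 < δ := by
      rw [hδ_def, Finset.lt_min'_iff]
      intro y hy
      rw [ht_def, Finset.mem_image] at hy
      obtain ⟨z, hz, hzy⟩ := hy
      rw [← hzy]
      exact abs_pos.mpr (sub_ne_zero.mpr (fun h => hr (h ▸ hz)))
    obtain ⟨a, ha1, ha2⟩ := exists_rat_btwn (show r - δ < r by linarith)
    obtain ⟨b, hb1, hb2⟩ := exists_rat_btwn (show r < r + δ by linarith)
    refine ⟨a, b, ha2, hb1, ?_⟩
    rintro y hy ⟨hy1, hy2⟩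
    have hmin : δ ≤ |y - r| := Finset.min'_le t _ (Finset.mem_image_of_mem _ hy)
    rcases abs_cases (y - r) with ⟨he, _⟩ | ⟨he, _⟩ <;> linarith
  · obtain ⟨a, ha1, ha2⟩ := exists_rat_btwn (show r - 1 < r by linarith)
    obtain ⟨b, hb1, hb2⟩ := exists_rat_btwn (show r < r + 1 by linarith)
    exact ⟨a, b, ha2, hb1, fun y hy _ => hs ⟨y, hy⟩⟩

/-- For every index set `I` of infinite cardinality at most continuum, there is a
countable dense subset `C` of `2^I` each of whose points is a limit of a sequence of
other points of `C`. -/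
theorem exists_countable_dense_sequentially_selfconverging
    (I : Type) (h1 : Cardinal.aleph0 ≤ Cardinal.mk I)
    (h2 : Cardinal.mk I ≤ Cardinal.continuum) :
    ∃ C : Set (I → Bool), C.Countable ∧ Dense C ∧
      ∀ c ∈ C, ∃ f : ℕ → (I → Bool), (∀ n, f n ∈ C \ {c}) ∧ Tendsto f atTop (nhds c) := by
  classical
  have hinf : Infinite I := Cardinal.infinite_iff.mpr h1
  obtain ⟨g⟩ : Nonempty (I ↪ ℝ) := by
    rw [← Cardinal.mk_real] at h2
    exact Cardinal.le_def _ _ |>.mp h2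
  set e : ℕ ↪ I := Infinite.natEmbedding I with he_def
  set F : Finset (ℚ × ℚ) × Finset ℕ → (I → Bool) :=
    fun P i => xor (decide (∃ q ∈ P.1, (q.1:ℝ) < g i ∧ (g i:ℝ) < q.2))
      (decide (∃ n ∈ P.2, e n = i)) with hF_def
  refine ⟨Set.range F, Set.countable_range F, ?_, ?_⟩
  · -- density
    rw [dense_iff_inter_open]
    rintro U hU ⟨x, hx⟩
    obtain ⟨Fs, u, hu, hsub⟩ := isOpen_pi_iff.mp hU x hx
    -- separating intervals
    have hsep : ∀ i : I, ∃ a b : ℚ, (a:ℝ) < g i ∧ (g i:ℝ) < b ∧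
        ∀ j ∈ Fs.erase i, ¬((a:ℝ) < g j ∧ (g j:ℝ) < b) := by
      intro i
      have hr : g i ∉ (Fs.erase i).image g := by
        rw [Finset.mem_image]
        rintro ⟨j, hj, hji⟩
        exact (Finset.mem_erase.mp hj).1 (g.injective hji)
      obtain ⟨a, b, h1, h2, h3⟩ := rat_interval_avoid (g i) ((Fs.erase i).image g) hr
      exact ⟨a, b, h1, h2, fun j hj => h3 (g j) (Finset.mem_image_of_mem _ hj)⟩
    choose a b ha hb hab using hsep
    set S : Finset (ℚ × ℚ) := (Fs.filter (fun i => x i = true)).image (fun i => (a i, b i))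
      with hS_def
    set y := F (S, ∅) with hy_def
    have hyx : ∀ i ∈ Fs, y i = x i := by
      intro i hi
      have hempty : (∃ n ∈ (∅ : Finset ℕ), e n = i) = False := by simp
      rw [hy_def, hF_def]
      simp only [hempty, decide_false, Bool.xor_false]
      rcases Bool.eq_false_or_eq_true (x i) with hxi | hxi
      · rw [hxi, decide_eq_true_iff]
        exact ⟨(a i, b i), Finset.mem_image_of_mem _ (Finset.mem_filter.mpr ⟨hi, hxi⟩),
          ha i, hb i⟩
      · rw [hxi, decide_eq_false_iff_not]
        rintro ⟨q, hq, hq1, hq2⟩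
        rw [hS_def, Finset.mem_image] at hq
        obtain ⟨j, hj, hjq⟩ := hq
        rw [Finset.mem_filter] at hj
        have hji : i ∈ Fs.erase j := by
          refine Finset.mem_erase.mpr ⟨?_, hi⟩
          rintro rfl; rw [hj.2] at hxi; simp at hxi
        exact hab j i hji (by rw [← hjq] at hq1 hq2; exact ⟨hq1, hq2⟩)
    refine ⟨y, hsub ?_, ⟨(S, ∅), rfl⟩⟩
    intro i hi
    rw [hyx i hi]
    exact (hu i hi).2
  · -- self-converging
    rintro c ⟨⟨S, s⟩, rfl⟩
    refine ⟨fun n => F (S, symmDiff s {n}), fun n => ⟨⟨(S, symmDiff s {n}), rfl⟩, ?_⟩, ?_⟩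
    · -- f n ≠ c
      simp only [Set.mem_singleton_iff]
      intro hEq
      have := congrFun hEq (e n)
      rw [hF_def] at this
      simp only at this
      have h1 : (∃ m ∈ symmDiff s {n}, e m = e n) ↔ n ∉ s := by
        constructor
        · rintro ⟨m, hm, hme⟩
          have : m = n := e.injective hme
          subst this
          rw [Finset.mem_symmDiff] at hm
          simp at hm
          tauto
        · intro hn
          exact ⟨n, Finset.mem_symmDiff.mpr (Or.inr ⟨Finset.mem_singleton_self n, hn⟩), rfl⟩
      have h2 : (∃ m ∈ s, e m = e n) ↔ n ∈ s := by
        constructor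
        · rintro ⟨m, hm, hme⟩; exact e.injective hme ▸ hm
        · intro hn; exact ⟨n, hn, rfl⟩
      by_cases hns : n ∈ s <;>
        simp [h1, h2, hns, Finset.mem_symmDiff] at this
    · -- tendsto
      rw [tendsto_pi_nhds]
      intro i
      have hev : ∀ᶠ n in atTop, e n ≠ i := by
        rw [← Nat.cofinite_eq_atTop]
        have hfin : {n : ℕ | e n = i}.Finite := by
          have : {n : ℕ | e n = i} ⊆ e ⁻¹' {i} := fun n hn => hn
          exact ((Set.finite_singleton i).preimage e.injective.injOn).subset this
        exact Set.Finite.eventually_cofinite_notMem hfin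
      refine tendsto_const_nhds.congr' ?_
      filter_upwards [hev] with n hn
      have hiff : (∃ m ∈ symmDiff s {n}, e m = i) ↔ ∃ m ∈ s, e m = i := by
        constructor
        · rintro ⟨m, hm, hme⟩
          rw [Finset.mem_symmDiff] at hm
          rcases hm with ⟨hm, _⟩ | ⟨hm, _⟩
          · exact ⟨m, hm, hme⟩
          · rw [Finset.mem_singleton] at hm
            subst hm
            exact absurd hme hn
        · rintro ⟨m, hm, hme⟩
          refine ⟨m, ?_, hme⟩
          rw [Finset.mem_symmDiff]
          left
          refine ⟨hm, ?_⟩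
          rw [Finset.mem_singleton]
          rintro rfl
          exact hn hme
      simp only [hF_def]
      rw [decide_eq_decide.mpr hiff]
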